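/- Let γ ∈ (0,1]. For every initial state α = (α_1,…,α_n,l) of the PI-Split chain such that at least two coordinates α_i with i ≠ l are zero and max_{1≤i≤n} α_i ≥ s_max, one has E_α[ Σ_{i=1}^n Q^S_i(1)^{1+γ} ] − Σ_{i=1}^n α_i^{1+γ} ≤ −(max_{1≤i≤n} α_i)^γ + n·(σ_a² + λ²). -/

import Mathlib

open MeasureTheory ENNReal Filter ProbabilityTheory

namespace PISplit

/-- The state space of the PI-Split chain: queue lengths and identity of the Last-Idle server. -/
abbrev State (n : ℕ) := (Fin n → ℕ) × Fin n

/-- The set of idle servers for the queue-length vector `q`. -/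
def idleSet {n : ℕ} (q : Fin n → ℕ) : Finset (Fin n) := Finset.univ.filter (fun i => q i = 0)

/-- One step of the PI-Split dynamics.  If some server is idle, the batch is split among the
idle servers according to the splitting rule `f` (evaluated at the current queue lengths, the
batch size and the splitting randomization `b`) and the new Last-Idle server is chosen
uniformly among the idle servers (via `choice` applied to the uniform noise `u`); otherwise the
whole batch joins the queue of the Last-Idle server.  Then every server serves up to its
capacity (`ℕ`-subtraction is truncated, realizing the positive part `[·]⁺`). -/
def step {n : ℕ} (choice : Finset (Fin n) → ℝ → Fin n)
    (f : (Fin n → ℕ) → ℕ → ℝ → (Fin n → ℕ))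
    (x : State n) (batch : ℕ) (svc : Fin n → ℕ) (u : ℝ) (b : ℝ) : State n :=
  if (idleSet x.1).Nonempty then
    (fun i => x.1 i + f x.1 batch b i - svc i, choice (idleSet x.1) u)
  else
    (fun i => x.1 i + (if x.2 = i then batch else 0) - svc i, x.2)

/-- The PI-Split trajectory `X^S = (Q^S, LI^S)` started from `α`; the step from time `t` to
`t+1` (i.e. time slot `t+1`) uses the noise of index `t`. -/
def traj {n : ℕ} {Ω : Type} (choice : Finset (Fin n) → ℝ → Fin n)
    (f : (Fin n → ℕ) → ℕ → ℝ → (Fin n → ℕ))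
    (a : ℕ → Ω → ℕ) (s : Fin n → ℕ → Ω → ℕ) (U : ℕ → Ω → ℝ) (B : ℕ → Ω → ℝ)
    (α : State n) : ℕ → Ω → State n
  | 0 => fun _ => α
  | (t+1) => fun ω =>
      step choice f (traj choice f a s U B α t ω) (a t ω) (fun i => s i t ω) (U t ω) (B t ω)

/-- Index type for the driving noise: arrivals, services, tie-breaking uniforms, and
splitting randomization. -/
def NoiseIdx (n : ℕ) := ((ℕ ⊕ (Fin n × ℕ)) ⊕ ℕ) ⊕ ℕ

/-- Value type of each noise coordinate. -/
def NoiseType {n : ℕ} : NoiseIdx n → Type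
  | .inl (.inl (.inl _)) => ℕ
  | .inl (.inl (.inr _)) => ℕ
  | .inl (.inr _) => ℝ
  | .inr _ => ℝ

instance {n : ℕ} : ∀ k : NoiseIdx n, MeasurableSpace (NoiseType k)
  | .inl (.inl (.inl _)) => inferInstanceAs (MeasurableSpace ℕ)
  | .inl (.inl (.inr _)) => inferInstanceAs (MeasurableSpace ℕ)
  | .inl (.inr _) => inferInstanceAs (MeasurableSpace ℝ)
  | .inr _ => inferInstanceAs (MeasurableSpace ℝ)

/-- The combined noise family. -/
def noise {n : ℕ} {Ω : Type} (a : ℕ → Ω → ℕ) (s : Fin n → ℕ → Ω → ℕ)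
    (U : ℕ → Ω → ℝ) (B : ℕ → Ω → ℝ) : ∀ k : NoiseIdx n, Ω → NoiseType k
  | .inl (.inl (.inl t)) => a t
  | .inl (.inl (.inr p)) => s p.1 p.2
  | .inl (.inr t) => U t
  | .inr t => B t

/-- The empty state with Last-Idle server `i`. -/
def emptyState {n : ℕ} (i : Fin n) : State n := (fun _ => 0, i)

/-- First time `t ≥ 1` at which the process `X` lies in `B` (with value `∞ ∈ ℝ≥0∞`
if this never happens). -/
noncomputable def hitTime {n : ℕ} {Ω : Type} (X : ℕ → Ω → State n)
    (B : Set (State n)) (ω : Ω) : ℝ≥0∞ :=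
  sInf {x : ℝ≥0∞ | ∃ t : ℕ, 1 ≤ t ∧ X t ω ∈ B ∧ x = (t : ℝ≥0∞)}

end PISplit


private lemma pisplit_rpow_mono_nat {γ : ℝ} (hγ : 0 ≤ γ) {a b : ℕ} (h : a ≤ b) :
    (a : ℝ≥0∞) ^ γ ≤ (b : ℝ≥0∞) ^ γ :=
  ENNReal.rpow_le_rpow (by exact_mod_cast h) hγ

private lemma pisplit_keyA {γ : ℝ} (hγ0 : 0 < γ) {m : ℕ} (hm : 1 ≤ m) :
    ((m - 1 : ℕ) : ℝ≥0∞) ^ ((1 : ℝ) + γ) + (m : ℝ≥0∞) ^ γ ≤ (m : ℝ≥0∞) ^ ((1 : ℝ) + γ) := by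
  set x := ((m - 1 : ℕ) : ℝ≥0∞) with hxdef
  set y := ((m : ℕ) : ℝ≥0∞) with hydef
  have hx : x + 1 = y := by
    rw [hxdef, hydef]
    exact_mod_cast congrArg (Nat.cast : ℕ → ℝ≥0∞) (Nat.succ_pred_eq_of_pos hm)
  have hxy : x ≤ y := by rw [← hx]; exact le_self_add
  have hy0 : y ≠ 0 := by
    rw [hydef]; exact Nat.cast_ne_zero.mpr (by omega)
  have hytop : y ≠ ⊤ := by rw [hydef]; exact ENNReal.natCast_ne_top m
  have h1 : y ^ ((1 : ℝ) + γ) = y * y ^ γ := by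
    rw [ENNReal.rpow_add 1 γ hy0 hytop, ENNReal.rpow_one]
  have h2 : x ^ ((1 : ℝ) + γ) ≤ x * y ^ γ := by
    rcases eq_or_ne x 0 with h0 | h0
    · simp [h0, ENNReal.zero_rpow_of_pos (by linarith : (0:ℝ) < 1 + γ)]
    · have hxtop : x ≠ ⊤ := by rw [hxdef]; exact ENNReal.natCast_ne_top _
      rw [ENNReal.rpow_add 1 γ h0 hxtop, ENNReal.rpow_one]
      exact mul_le_mul_right (ENNReal.rpow_le_rpow hxy hγ0.le) x
  calc x ^ ((1 : ℝ) + γ) + y ^ γ ≤ x * y ^ γ + 1 * y ^ γ := by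
        rw [one_mul]; exact add_le_add h2 (le_refl _)
    _ = (x + 1) * y ^ γ := (add_mul x 1 (y ^ γ)).symm
    _ = y * y ^ γ := by rw [hx]
    _ = y ^ ((1 : ℝ) + γ) := h1.symm

private lemma pisplit_keyB {γ : ℝ} (hγ0 : 0 < γ) (hγ1 : γ ≤ 1) (k : ℕ) :
    (k : ℝ≥0∞) ^ ((1 : ℝ) + γ) ≤ (k : ℝ≥0∞) ^ 2 := by
  rcases Nat.eq_zero_or_pos k with h0 | h1
  · simp [h0, ENNReal.zero_rpow_of_pos (by linarith : (0:ℝ) < 1 + γ)]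
  · have hk1 : (1 : ℝ≥0∞) ≤ (k : ℝ≥0∞) := by exact_mod_cast h1
    calc (k : ℝ≥0∞) ^ ((1:ℝ) + γ) ≤ (k : ℝ≥0∞) ^ ((2:ℕ) : ℝ) :=
          ENNReal.rpow_le_rpow_of_exponent_le hk1 (by push_cast; linarith)
      _ = (k : ℝ≥0∞) ^ 2 := ENNReal.rpow_natCast _ 2

/-- **One-step drift bound for PI-Split** (eq. (Split leave one)).  Let `γ ∈ (0,1]`.  For
every initial state `α = (α_1,…,α_n,l)` of the PI-Split chain such that at least two
coordinates `α_i` with `i ≠ l` vanish and `max_i α_i ≥ s_max`, one has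
`E_α [∑ i, Q^S_i(1)^(1+γ)] − ∑ i, α_i^(1+γ) ≤ −(max_i α_i)^γ + n (σ_a² + λ²)`, stated here in
the (equivalent) rearranged form with all terms nonnegative and values in `[0,∞]`. -/
theorem piSplit_one_step_drift
    {n : ℕ} (hn : 2 ≤ n) {Ω : Type} [MeasurableSpace Ω]
    (P : PISplit.State n → Measure Ω) (hP : ∀ α, IsProbabilityMeasure (P α))
    (a : ℕ → Ω → ℕ) (s : Fin n → ℕ → Ω → ℕ) (U : ℕ → Ω → ℝ) (B : ℕ → Ω → ℝ)
    (choice : Finset (Fin n) → ℝ → Fin n)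
    (f : (Fin n → ℕ) → ℕ → ℝ → (Fin n → ℕ))
    (νa : Measure ℕ) (νs : Fin n → Measure ℕ) (νB : Measure ℝ)
    (lam σa : ℝ) (μ : Fin n → ℝ) (smax : ℕ)
    (ha_meas : ∀ t, Measurable (a t)) (hs_meas : ∀ i t, Measurable (s i t))
    (hU_meas : ∀ t, Measurable (U t)) (hB_meas : ∀ t, Measurable (B t))
    (hchoice_meas : ∀ I, Measurable (choice I))
    (hf_sum : ∀ q batch b, ∑ i, f q batch b i = batch)
    (hf_idle : ∀ q batch b i, (∃ j, q j = 0) → q i ≠ 0 → f q batch b i = 0)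
    (ha_law : ∀ α t, Measure.map (a t) (P α) = νa)
    (hs_law : ∀ α i t, Measure.map (s i t) (P α) = νs i)
    (hU_law : ∀ α t, Measure.map (U t) (P α) = volume.restrict (Set.Icc (0:ℝ) 1))
    (hB_law : ∀ α t, Measure.map (B t) (P α) = νB) (hνB : IsProbabilityMeasure νB)
    (hindep : ∀ α, iIndepFun (PISplit.noise a s U B) (P α))
    (ha0 : νa {0} ≠ 0)
    (ha_mean : ∫⁻ k, (k : ℝ≥0∞) ∂νa = ENNReal.ofReal lam)
    (ha_var : ∫⁻ k, ((k : ℝ≥0∞)) ^ 2 ∂νa = ENNReal.ofReal (lam ^ 2 + σa ^ 2))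
    (hs_bdd : ∀ i, (νs i) {k : ℕ | ¬(1 ≤ k ∧ k ≤ smax)} = 0)
    (hs_mean : ∀ i, ∫⁻ k, (k : ℝ≥0∞) ∂(νs i) = ENNReal.ofReal (μ i))
    (hchoice_unif : ∀ I : Finset (Fin n), I.Nonempty → ∀ i ∈ I,
      (volume.restrict (Set.Icc (0:ℝ) 1)) {u | choice I u = i} = (I.card : ℝ≥0∞)⁻¹) :
    ∀ X : PISplit.State n → ℕ → Ω → PISplit.State n,
      X = PISplit.traj choice f a s U B →
    ∀ γ : ℝ, 0 < γ → γ ≤ 1 →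
    ∀ α : PISplit.State n,
      (∃ i j : Fin n, i ≠ j ∧ i ≠ α.2 ∧ j ≠ α.2 ∧ α.1 i = 0 ∧ α.1 j = 0) →
      smax ≤ Finset.univ.sup α.1 →
      ∫⁻ ω, ∑ i, ((X α 1 ω).1 i : ℝ≥0∞) ^ ((1 : ℝ) + γ) ∂(P α)
          + ((Finset.univ.sup α.1 : ℕ) : ℝ≥0∞) ^ γ
        ≤ ∑ i, (α.1 i : ℝ≥0∞) ^ ((1 : ℝ) + γ)
          + ENNReal.ofReal ((n : ℝ) * (σa ^ 2 + lam ^ 2)) := by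
  intro X hX γ hγ0 hγ1 α hzero hMsmax
  haveI := hP α
  obtain ⟨i0, j0, hij, hi0l, hj0l, hq0, hq0'⟩ := hzero
  have hne : (Finset.univ : Finset (Fin n)).Nonempty := ⟨i0, Finset.mem_univ _⟩
  obtain ⟨istar, -, hstar⟩ := Finset.exists_mem_eq_sup Finset.univ hne α.1
  set M : ℕ := Finset.univ.sup α.1 with hMdef
  -- smax ≥ 1
  have hsmax1 : 1 ≤ smax := by
    rcases Nat.eq_zero_or_pos smax with h0 | h1
    · exfalso
      have hprob : IsProbabilityMeasure (νs istar) := by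
        rw [← hs_law α istar 0]
        exact Measure.isProbabilityMeasure_map (hs_meas istar 0).aemeasurable
      have hzero' : (νs istar) Set.univ = 0 := by
        have h := hs_bdd istar
        have hset : {k : ℕ | ¬(1 ≤ k ∧ k ≤ smax)} = Set.univ := by
          ext k
          simp only [Set.mem_setOf_eq, Set.mem_univ, iff_true]
          rintro ⟨h1k, hk⟩; omega
        rwa [hset] at h
      rw [hprob.measure_univ] at hzero'
      exact one_ne_zero hzero'
    · exact h1
  have hM1 : 1 ≤ M := le_trans hsmax1 hMsmax
  have hstarpos : α.1 istar ≠ 0 := by omega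
  have hidle : (PISplit.idleSet α.1).Nonempty :=
    ⟨i0, by simp [PISplit.idleSet, hq0]⟩
  -- a.e. bound on the service of the max server
  have hae : ∀ᵐ ω ∂(P α), 1 ≤ s istar 0 ω := by
    have hnull : (P α) (s istar 0 ⁻¹' {k : ℕ | ¬(1 ≤ k ∧ k ≤ smax)}) = 0 := by
      rw [← Measure.map_apply (hs_meas istar 0) (by trivial), hs_law α istar 0]
      exact hs_bdd istar
    rw [ae_iff]
    refine measure_mono_null ?_ hnull
    intro ω hω
    simp only [Set.mem_setOf_eq, Set.mem_preimage] at hω ⊢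
    exact fun h => hω h.1
  -- pointwise key inequality
  have key : ∀ ω, 1 ≤ s istar 0 ω →
      ∑ i, ((X α 1 ω).1 i : ℝ≥0∞) ^ ((1 : ℝ) + γ) + (M : ℝ≥0∞) ^ γ
        ≤ ∑ i, (α.1 i : ℝ≥0∞) ^ ((1 : ℝ) + γ) + ((a 0 ω : ℕ) : ℝ≥0∞) ^ 2 := by
    intro ω hs1
    have hXω : (X α 1 ω).1 = fun i => α.1 i + f α.1 (a 0 ω) (B 0 ω) i - s i 0 ω := by
      rw [hX]
      show (PISplit.step choice f (PISplit.traj choice f a s U B α 0 ω)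
        (a 0 ω) (fun i => s i 0 ω) (U 0 ω) (B 0 ω)).1 = _
      show (PISplit.step choice f α (a 0 ω) (fun i => s i 0 ω) (U 0 ω) (B 0 ω)).1 = _
      rw [PISplit.step, if_pos hidle]
    set F : Fin n → ℕ := f α.1 (a 0 ω) (B 0 ω) with hFdef
    have hFstar : F istar = 0 := hf_idle α.1 (a 0 ω) (B 0 ω) istar ⟨i0, hq0⟩ hstarpos
    -- bound for the max server
    have hQstar : (X α 1 ω).1 istar ≤ M - 1 := by
      rw [hXω]
      simp only
      rw [hFstar, ← hstar]
      omega
    -- bound for the other servers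
    have hper : ∀ i, ((X α 1 ω).1 i : ℝ≥0∞) ^ ((1 : ℝ) + γ)
        ≤ (α.1 i : ℝ≥0∞) ^ ((1 : ℝ) + γ) + ((F i : ℕ) : ℝ≥0∞) ^ 2 := by
      intro i
      rcases eq_or_ne (α.1 i) 0 with h0 | h0
      · have hQ : (X α 1 ω).1 i ≤ F i := by rw [hXω]; simp only; omega
        calc ((X α 1 ω).1 i : ℝ≥0∞) ^ ((1 : ℝ) + γ)
            ≤ ((F i : ℕ) : ℝ≥0∞) ^ ((1 : ℝ) + γ) :=
              pisplit_rpow_mono_nat (by linarith) hQ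
          _ ≤ ((F i : ℕ) : ℝ≥0∞) ^ 2 := pisplit_keyB hγ0 hγ1 _
          _ ≤ _ := le_add_self
      · have hF0 : F i = 0 := hf_idle α.1 (a 0 ω) (B 0 ω) i ⟨i0, hq0⟩ h0
        have hQ : (X α 1 ω).1 i ≤ α.1 i := by rw [hXω]; simp only; rw [hF0]; omega
        exact le_trans (pisplit_rpow_mono_nat (by linarith) hQ) le_self_add
    -- bound on the arrivals split among the idle servers
    have hFA : ∀ i, F i ≤ a 0 ω := by
      intro i
      have := Finset.single_le_sum (f := F) (fun j _ => Nat.zero_le (F j)) (Finset.mem_univ i)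
      rwa [hFdef, hf_sum α.1 (a 0 ω) (B 0 ω)] at this
    have hsumF : ∑ i ∈ Finset.univ.erase istar, F i ≤ a 0 ω := by
      have h1 : ∑ i ∈ Finset.univ.erase istar, F i ≤ ∑ i, F i :=
        Finset.sum_le_sum_of_subset (Finset.erase_subset _ _)
      rw [hFdef, hf_sum α.1 (a 0 ω) (B 0 ω)] at h1
      exact h1
    have hF2nat : ∑ i ∈ Finset.univ.erase istar, F i ^ 2 ≤ (a 0 ω) ^ 2 := by
      calc ∑ i ∈ Finset.univ.erase istar, F i ^ 2
          ≤ ∑ i ∈ Finset.univ.erase istar, F i * a 0 ω :=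
            Finset.sum_le_sum (fun i _ => by
              have := hFA i; calc F i ^ 2 = F i * F i := sq (F i)
                _ ≤ F i * a 0 ω := Nat.mul_le_mul_left _ this)
        _ = (∑ i ∈ Finset.univ.erase istar, F i) * a 0 ω := (Finset.sum_mul _ _ _).symm
        _ ≤ a 0 ω * a 0 ω := Nat.mul_le_mul_right _ hsumF
        _ = (a 0 ω) ^ 2 := (sq _).symm
    have hF2 : ∑ i ∈ Finset.univ.erase istar, ((F i : ℕ) : ℝ≥0∞) ^ 2
        ≤ ((a 0 ω : ℕ) : ℝ≥0∞) ^ 2 := by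
      have : ((∑ i ∈ Finset.univ.erase istar, F i ^ 2 : ℕ) : ℝ≥0∞)
          ≤ (((a 0 ω) ^ 2 : ℕ) : ℝ≥0∞) := by exact_mod_cast hF2nat
      push_cast at this
      exact this
    -- assemble
    have hsplit : ∑ i, ((X α 1 ω).1 i : ℝ≥0∞) ^ ((1 : ℝ) + γ)
        = ∑ i ∈ Finset.univ.erase istar, ((X α 1 ω).1 i : ℝ≥0∞) ^ ((1 : ℝ) + γ)
          + ((X α 1 ω).1 istar : ℝ≥0∞) ^ ((1 : ℝ) + γ) :=
      (Finset.sum_erase_add _ _ (Finset.mem_univ istar)).symm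
    have hsplit' : ∑ i, (α.1 i : ℝ≥0∞) ^ ((1 : ℝ) + γ)
        = ∑ i ∈ Finset.univ.erase istar, (α.1 i : ℝ≥0∞) ^ ((1 : ℝ) + γ)
          + (α.1 istar : ℝ≥0∞) ^ ((1 : ℝ) + γ) :=
      (Finset.sum_erase_add _ _ (Finset.mem_univ istar)).symm
    have hstarM : (α.1 istar : ℝ≥0∞) = (M : ℝ≥0∞) := by rw [hstar]
    calc ∑ i, ((X α 1 ω).1 i : ℝ≥0∞) ^ ((1 : ℝ) + γ) + (M : ℝ≥0∞) ^ γ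
        = ∑ i ∈ Finset.univ.erase istar, ((X α 1 ω).1 i : ℝ≥0∞) ^ ((1 : ℝ) + γ)
          + (((X α 1 ω).1 istar : ℝ≥0∞) ^ ((1 : ℝ) + γ) + (M : ℝ≥0∞) ^ γ) := by
          rw [hsplit, add_assoc]
      _ ≤ ∑ i ∈ Finset.univ.erase istar,
            ((α.1 i : ℝ≥0∞) ^ ((1 : ℝ) + γ) + ((F i : ℕ) : ℝ≥0∞) ^ 2)
          + (((M - 1 : ℕ) : ℝ≥0∞) ^ ((1 : ℝ) + γ) + (M : ℝ≥0∞) ^ γ) := by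
          exact add_le_add (Finset.sum_le_sum fun i _ => hper i)
            (add_le_add (pisplit_rpow_mono_nat (by linarith) hQstar) (le_refl _))
      _ ≤ ∑ i ∈ Finset.univ.erase istar,
            ((α.1 i : ℝ≥0∞) ^ ((1 : ℝ) + γ) + ((F i : ℕ) : ℝ≥0∞) ^ 2)
          + (M : ℝ≥0∞) ^ ((1 : ℝ) + γ) := by
          gcongr
          exact pisplit_keyA hγ0 hM1
      _ = (∑ i ∈ Finset.univ.erase istar, (α.1 i : ℝ≥0∞) ^ ((1 : ℝ) + γ)
            + (α.1 istar : ℝ≥0∞) ^ ((1 : ℝ) + γ))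
          + ∑ i ∈ Finset.univ.erase istar, ((F i : ℕ) : ℝ≥0∞) ^ 2 := by
          rw [Finset.sum_add_distrib, hstarM]; ring
      _ ≤ ∑ i, (α.1 i : ℝ≥0∞) ^ ((1 : ℝ) + γ) + ((a 0 ω : ℕ) : ℝ≥0∞) ^ 2 := by
          rw [← hsplit']
          gcongr
  -- integrate
  have hmeas2 : Measurable (fun ω => ((a 0 ω : ℕ) : ℝ≥0∞) ^ 2) := by
    exact ((measurable_from_top.comp (ha_meas 0)).pow_const 2)
  have hA2 : ∫⁻ ω, ((a 0 ω : ℕ) : ℝ≥0∞) ^ 2 ∂(P α) = ENNReal.ofReal (lam ^ 2 + σa ^ 2) := by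
    rw [← ha_var, ← ha_law α 0,
      lintegral_map (by exact measurable_from_top) (ha_meas 0)]
  calc ∫⁻ ω, ∑ i, ((X α 1 ω).1 i : ℝ≥0∞) ^ ((1 : ℝ) + γ) ∂(P α) + (M : ℝ≥0∞) ^ γ
      = ∫⁻ ω, (∑ i, ((X α 1 ω).1 i : ℝ≥0∞) ^ ((1 : ℝ) + γ) + (M : ℝ≥0∞) ^ γ) ∂(P α) := by
        rw [lintegral_add_right _ measurable_const, lintegral_const, measure_univ, mul_one]
    _ ≤ ∫⁻ ω, (∑ i, (α.1 i : ℝ≥0∞) ^ ((1 : ℝ) + γ) + ((a 0 ω : ℕ) : ℝ≥0∞) ^ 2) ∂(P α) := by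
        refine lintegral_mono_ae ?_
        filter_upwards [hae] with ω hω using key ω hω
    _ = ∑ i, (α.1 i : ℝ≥0∞) ^ ((1 : ℝ) + γ) + ENNReal.ofReal (lam ^ 2 + σa ^ 2) := by
        rw [lintegral_add_right _ hmeas2, lintegral_const, measure_univ, mul_one, hA2]
    _ ≤ ∑ i, (α.1 i : ℝ≥0∞) ^ ((1 : ℝ) + γ)
          + ENNReal.ofReal ((n : ℝ) * (σa ^ 2 + lam ^ 2)) := by
        gcongr
        have hn2 : (2 : ℝ) ≤ (n : ℝ) := by exact_mod_cast hn
        nlinarith [sq_nonneg lam, sq_nonneg σa]
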